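/- Let $I\subseteq\{0,\ldots,d\}$ with $d\notin I$. Then $\Diamond^d(\Gamma^d_I)=\{d,v_d\}*\Diamond^{d-1}(\Gamma^{d-1}_I)$, i.e., the $d$-dimensional diamond complex of $\Gamma_I$ is the join of the two-point complex $\{d,v_d\}$ (as a 0-sphere) with the $(d-1)$-dimensional diamond complex of $\Gamma_I$. -/

import Mathlib

namespace Paper

/-- Ambient vertex type in dimension `d`: original vertices `0,…,d+1` (left)
and new vertices `v_0,…,v_d` (right). -/
abbrev V (d : ℕ) := Sum (Fin (d+2)) (Fin (d+1))

def origV (d m : ℕ) : V d := Sum.inl ⟨m % (d+2), Nat.mod_lt m (by omega)⟩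
def newV (d m : ℕ) : V d := Sum.inr ⟨m % (d+1), Nat.mod_lt m (by omega)⟩

variable {W : Type*} [DecidableEq W] {W' : Type*} [DecidableEq W']

def IsComplex (Δ : Set (Finset W)) : Prop := ∀ F ∈ Δ, ∀ G, G ⊆ F → G ∈ Δ

def isFacet (Δ : Set (Finset W)) (F : Finset W) : Prop :=
  F ∈ Δ ∧ ∀ G ∈ Δ, F ⊆ G → G = F

def simplexOn (A : Finset W) : Set (Finset W) := {F | F ⊆ A}

def bdrySimplex (A : Finset W) : Set (Finset W) := {F | F ⊂ A}

def joinC (Δ Γ : Set (Finset W)) : Set (Finset W) := {s | ∃ a ∈ Δ, ∃ b ∈ Γ, s = a ∪ b}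

def lkC (Δ : Set (Finset W)) (F : Finset W) : Set (Finset W) :=
  {G | Disjoint F G ∧ F ∪ G ∈ Δ}

def delFace (Δ : Set (Finset W)) (F : Finset W) : Set (Finset W) := {G ∈ Δ | ¬ F ⊆ G}

/-- Stellar subdivision at `F` with new vertex `v`. -/
def sdC (v : W) (F : Finset W) (Δ : Set (Finset W)) : Set (Finset W) :=
  delFace Δ F ∪ joinC (simplexOn {v}) (joinC (bdrySimplex F) (lkC Δ F))

/-- Deletion of a subcomplex: the complex generated by the facets of `Δ`
that are not facets of `Γ`. -/
def delSub (Δ Γ : Set (Finset W)) : Set (Finset W) :=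
  {G | ∃ F, isFacet Δ F ∧ ¬ isFacet Γ F ∧ G ⊆ F}

def IsInduced (Γ Δ : Set (Finset W)) : Prop :=
  Γ ⊆ Δ ∧ ∀ F ∈ Δ, (∀ v ∈ F, ({v} : Finset W) ∈ Γ) → F ∈ Γ

/-- Simplicial isomorphism (via a permutation of the ambient vertex set). -/
def IsoC (Δ Γ : Set (Finset W)) : Prop :=
  ∃ e : Equiv.Perm W, ∀ F : Finset W, F ∈ Δ ↔ F.image (⇑e) ∈ Γ

def mapC (f : W → W') (Δ : Set (Finset W)) : Set (Finset W') := {F | ∃ G ∈ Δ, F = G.image f}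

/-- Number of faces of cardinality `i` (i.e. dimension `i-1`). -/
noncomputable def fnum (Δ : Set (Finset W)) (i : ℕ) : ℕ := {F | F ∈ Δ ∧ F.card = i}.ncard

/-- `h`-numbers of a `d`-dimensional complex. -/
noncomputable def hnum (d : ℕ) (Δ : Set (Finset W)) (j : ℕ) : ℤ :=
  ∑ i ∈ Finset.range (j+1),
    (-1 : ℤ)^(j-i) * ((d+1-i).choose (d+1-j) : ℤ) * (fnum Δ i : ℤ)

/-- `R` is the restriction face of the `i`-th facet of the ordering `L`. -/
def IsRestriction (L : List (Finset W)) (i : ℕ) (R : Finset W) : Prop :=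
  R ⊆ L.getD i ∅ ∧ (∀ j < i, ¬ R ⊆ L.getD j ∅) ∧
    ∀ G ⊆ L.getD i ∅, (∀ j < i, ¬ G ⊆ L.getD j ∅) → R ⊆ G

def IsShelling (Δ : Set (Finset W)) (L : List (Finset W)) : Prop :=
  L.Nodup ∧ (∀ F, F ∈ L ↔ isFacet Δ F) ∧ ∀ i < L.length, ∃ R, IsRestriction L i R

def Shellable (Δ : Set (Finset W)) : Prop := ∃ L, IsShelling Δ L

def IsRelRestriction (Sg : Set (Finset W)) (L : List (Finset W)) (i : ℕ) (R : Finset W) : Prop :=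
  R ⊆ L.getD i ∅ ∧ R ∉ Sg ∧ (∀ j < i, ¬ R ⊆ L.getD j ∅) ∧
    ∀ G ⊆ L.getD i ∅, G ∉ Sg → (∀ j < i, ¬ G ⊆ L.getD j ∅) → R ⊆ G

/-- Shelling of the relative complex `(Δ, Sg)`. -/
def IsRelShelling (Δ Sg : Set (Finset W)) (L : List (Finset W)) : Prop :=
  L.Nodup ∧ (∀ F, F ∈ L ↔ (isFacet Δ F ∧ F ∉ Sg)) ∧
    ∀ i < L.length, ∃ R, IsRelRestriction Sg L i R

/-- The facet of the `(d+1)`-simplex on `{0,…,d+1}` omitting vertex `i`. -/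
def Gface (d i : ℕ) : Finset (V d) :=
  ((Finset.range (d+2)).filter (fun j => j ≠ i)).image (origV d)

def GammaC (d i : ℕ) : Set (Finset (V d)) := simplexOn (Gface d i)

def GammaU (d : ℕ) (I : Finset ℕ) : Set (Finset (V d)) := {F | ∃ i ∈ I, F ⊆ Gface d i}

/-- The face `F_i = {i+1,…,d+1}` subdivided by the diamond operation. -/
def Fsub (d i : ℕ) : Finset (V d) := (Finset.Ioc i (d+1)).image (origV d)

/-- The diamond operation: successive stellar subdivisions at `F_0, F_1, …, F_d`
with new vertices `v_0,…,v_d` (subdivision at a non-face has no effect). -/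
def Diam (d : ℕ) (Δ : Set (Finset (V d))) : Set (Finset (V d)) :=
  (List.range (d+1)).foldl (fun Γ i => sdC (newV d i) (Fsub d i) Γ) Δ

def DiamU (d : ℕ) (I : Finset ℕ) : Set (Finset (V d)) := Diam d (GammaU d I)

/-- Boundary complex of the cross-polytope on the vertex pairs `{j, v_j}`, `j ∈ S`. -/
def crossN (d : ℕ) (S : Finset ℕ) : Set (Finset (V d)) :=
  {F | (∀ x ∈ F, ∃ j ∈ S, x = origV d j ∨ x = newV d j) ∧
       ∀ j ∈ S, ¬ (origV d j ∈ F ∧ newV d j ∈ F)}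

/-- Boundary complex: generated by the faces of cardinality `n` contained in
exactly one facet. -/
def bdryC (n : ℕ) (Δ : Set (Finset W)) : Set (Finset W) :=
  {G | ∃ F, G ⊆ F ∧ F ∈ Δ ∧ F.card = n ∧ ∃! H, isFacet Δ H ∧ F ⊆ H}

/-- Positions in `P` at which `G` differs from the reference facet `F0`. -/
def diffSet (d : ℕ) (P : Finset ℕ) (F0 G : Finset (V d)) : Finset ℕ :=
  P.filter (fun j => decide (origV d j ∈ G) ≠ decide (origV d j ∈ F0))

/-- Degree lexicographic comparison of characteristic (difference) sets. -/
def dlexLT (D D' : Finset ℕ) : Prop :=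
  D.card < D'.card ∨
    (D.card = D'.card ∧ ∃ m, m ∉ D ∧ m ∈ D' ∧ ∀ j < m, (j ∈ D ↔ j ∈ D'))

/-- `L` lists the facets of `Δ` in degree lexicographic order w.r.t. `F0`. -/
def IsDegLexOrder (d : ℕ) (P : Finset ℕ) (Δ : Set (Finset (V d)))
    (F0 : Finset (V d)) (L : List (Finset (V d))) : Prop :=
  L.Nodup ∧ (∀ F, F ∈ L ↔ isFacet Δ F) ∧
    L.Pairwise (fun G G' => dlexLT (diffSet d P F0 G) (diffSet d P F0 G'))

/-- Vertices of `F` sitting at the positions in `D`. -/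
def posVerts (d : ℕ) (F : Finset (V d)) (D : Finset ℕ) : Finset (V d) :=
  F.filter (fun x => ∃ j ∈ D, x = origV d j ∨ x = newV d j)

def IsoN (Δ Γ : Set (Finset ℕ)) : Prop :=
  ∃ e : Equiv.Perm ℕ, ∀ F : Finset ℕ, F ∈ Δ ↔ F.image (⇑e) ∈ Γ

def StellarMove (Δ Γ : Set (Finset ℕ)) : Prop :=
  ∃ (F : Finset ℕ) (v : ℕ), F ∈ Δ ∧ F ≠ ∅ ∧ (∀ G ∈ Δ, v ∉ G) ∧ Γ = sdC v F Δ

/-- PL homeomorphism of simplicial complexes, encoded via Alexander's theorem as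
stellar equivalence: the equivalence relation generated by stellar subdivisions
(and their inverses, the welds) together with simplicial isomorphisms. -/
def PLHomeo (Δ Γ : Set (Finset ℕ)) : Prop :=
  Relation.EqvGen (fun A B => StellarMove A B ∨ IsoN A B) Δ Γ

def encV (d : ℕ) : V d → ℕ := Sum.elim (fun j => 2 * j.val) (fun j => 2 * j.val + 1)

def toN (d : ℕ) (Δ : Set (Finset (V d))) : Set (Finset ℕ) := mapC (encV d) Δ

def ballN (c : ℕ) : Set (Finset ℕ) := {F | F ⊆ Finset.range c}

def sphereN (c : ℕ) : Set (Finset ℕ) := {F | F ⊂ Finset.range (c+1)}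

/-- `Δ` is a combinatorial ball of dimension `c-1` (a `(c-1)`-simplex has `c` vertices). -/
def IsCombBall (d c : ℕ) (Δ : Set (Finset (V d))) : Prop := PLHomeo (toN d Δ) (ballN c)

/-- `Δ` is a combinatorial sphere of dimension `c-1`. -/
def IsCombSphere (d c : ℕ) (Δ : Set (Finset (V d))) : Prop := PLHomeo (toN d Δ) (sphereN c)

def ConnC (Δ : Set (Finset W)) : Prop :=
  ∀ u v : W, ({u} : Finset W) ∈ Δ → ({v} : Finset W) ∈ Δ →
    Relation.ReflTransGen (fun a b => ({a, b} : Finset W) ∈ Δ) u v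

/-- Combinatorial `d`-manifold (possibly with boundary): connected, pure, and all
links of nonempty faces are combinatorial balls or spheres of dimension `d - |F|`. -/
def IsCombManifold (d : ℕ) (Δ : Set (Finset (V d))) : Prop :=
  IsComplex Δ ∧ (∅ : Finset (V d)) ∈ Δ ∧ ConnC Δ ∧
  (∀ F ∈ Δ, ∃ G, isFacet Δ G ∧ F ⊆ G ∧ G.card = d+1) ∧
  ∀ F ∈ Δ, F ≠ (∅ : Finset (V d)) →
    (IsCombBall d (d+1-F.card) (lkC Δ F) ∨ IsCombSphere d (d+1-F.card) (lkC Δ F))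

def liftV (d : ℕ) : V d → V (d+1) := Sum.map Fin.castSucc Fin.castSucc

/-- The relabeling `π : i ↦ i+1`, `v_i ↦ v_{i+1}`. -/
def piV (d : ℕ) : V d → V (d+1) := Sum.map Fin.succ Fin.succ

/-- The relabeling `ρ : i ↦ i-1`, `v_i ↦ v_{i-1}` (indices mod `d+1`). -/
def rhoV (d : ℕ) : V d → V d := fun x =>
  match x with
  | Sum.inl j => origV d ((j.val + d) % (d+1))
  | Sum.inr j => newV d ((j.val + d) % (d+1))

/-- `ψ` swaps the vertices `d` and `v_d`. -/
def psiV (d : ℕ) : V d → V d := fun x => Equiv.swap (origV d d) (newV d d) x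

def sigmaV (d : ℕ) : V d → V d := psiV d ∘ rhoV d

/-- `Δ` is (isomorphic to) the boundary complex of the `(d+1)`-dimensional
cross-polytope. -/
def IsCrossBdry (d : ℕ) (Δ : Set (Finset W)) : Prop :=
  ∃ f : Fin (d+1) × Bool → W, Function.Injective f ∧
    Δ = {F | (∀ v ∈ F, ∃ p, v = f p) ∧
             ∀ j : Fin (d+1), ¬ (f (j, true) ∈ F ∧ f (j, false) ∈ F)}

/-- `Sg` is a connected sum of `Δ` and `Γ`: they meet exactly in the full simplex
on a common facet `F`, which is removed. -/
def IsConnSum (Δ Γ Sg : Set (Finset W)) : Prop :=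
  ∃ F : Finset W, isFacet Δ F ∧ isFacet Γ F ∧ Δ ∩ Γ = simplexOn F ∧ Sg = (Δ ∪ Γ) \ {F}

/-- Connected sum of `m+1` copies of the boundary of the `(d+1)`-cross-polytope. -/
def IsCrossStacked (d : ℕ) : ℕ → Set (Finset W) → Prop
  | 0, Δ => IsCrossBdry d Δ
  | (m+1), Δ => ∃ A B : Set (Finset W), IsCrossStacked d m A ∧ IsCrossBdry d B ∧ IsConnSum A B Δ

/-- The initial facet of the block `Diam(Γ_{iℓ})` (for block index `ℓ ≥ 1`;
block `0` uses the facet `G0` meeting the boundary). -/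
def initFacet (d i1 iℓ : ℕ) (G0 : Finset (V d)) (ℓ : ℕ) : Finset (V d) :=
  if ℓ = 0 then G0
  else ((Finset.range iℓ).image (origV d)) ∪ {newV d iℓ} ∪
       ((Finset.Ioo iℓ (max i1 iℓ)).image (origV d)) ∪
       ((Finset.Icc (max i1 iℓ) d).image (newV d))


/-! ### Auxiliary material for Statement 10 -/

set_option linter.unusedSectionVars false

section Aux

variable {A B C : Set (Finset W)}

/-- Two-point complex `{∅, {a}, {v}}`. -/
def pairC (a v : W) : Set (Finset W) := simplexOn {a} ∪ simplexOn {v}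

/-- The left factor of the closed form of `Diam d (GammaC d j)`. -/
def Bset (d j : ℕ) : Finset (V d) := ((Finset.range j).image (origV d)) ∪ {newV d j}

/-- One step of the diamond operation. -/
def DiamStep (d : ℕ) (Γ : Set (Finset (V d))) (i : ℕ) : Set (Finset (V d)) :=
  sdC (newV d i) (Fsub d i) Γ

/-- The invariant complex after the first `i+1` steps of `Diam d` on `GammaC d j`. -/
def Inv (d j i : ℕ) : Set (Finset (V d)) :=
  joinC (simplexOn (Bset d j)) (joinC (crossN d (Finset.Ioc j i)) (bdrySimplex (Fsub d i)))

lemma mem_joinC {s : Finset W} :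
    s ∈ joinC A B ↔ ∃ a ∈ A, ∃ b ∈ B, s = a ∪ b := Iff.rfl

lemma joinC_comm : joinC A B = joinC B A := by
  ext s
  simp only [mem_joinC]
  constructor <;> rintro ⟨a, ha, b, hb, rfl⟩ <;> exact ⟨b, hb, a, ha, Finset.union_comm _ _⟩

lemma joinC_assoc : joinC (joinC A B) C = joinC A (joinC B C) := by
  ext s
  simp only [mem_joinC]
  constructor
  · rintro ⟨x, ⟨a, ha, b, hb, rfl⟩, c, hc, rfl⟩
    exact ⟨a, ha, b ∪ c, ⟨b, hb, c, hc, rfl⟩, (Finset.union_assoc a b c)⟩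
  · rintro ⟨a, ha, x, ⟨b, hb, c, hc, rfl⟩, rfl⟩
    exact ⟨a ∪ b, ⟨a, ha, b, hb, rfl⟩, c, hc, (Finset.union_assoc a b c).symm⟩

lemma joinC_left_comm : joinC A (joinC B C) = joinC B (joinC A C) := by
  rw [← joinC_assoc, joinC_comm (A := A), joinC_assoc]

lemma joinC_empty_right : joinC A (∅ : Set (Finset W)) = ∅ := by
  ext s; simp [mem_joinC]

lemma joinC_punit_right : joinC A ({∅} : Set (Finset W)) = A := by
  ext s
  simp only [mem_joinC, Set.mem_singleton_iff]
  constructor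
  · rintro ⟨a, ha, b, rfl, rfl⟩; simpa using ha
  · intro h; exact ⟨s, h, ∅, rfl, by simp⟩

lemma joinC_punit_left : joinC ({∅} : Set (Finset W)) A = A := by
  rw [joinC_comm]; exact joinC_punit_right

lemma joinC_union_right : joinC A (B ∪ C) = joinC A B ∪ joinC A C := by
  ext s
  simp only [mem_joinC, Set.mem_union]
  constructor
  · rintro ⟨a, ha, b, hb | hb, rfl⟩
    · exact Or.inl ⟨a, ha, b, hb, rfl⟩
    · exact Or.inr ⟨a, ha, b, hb, rfl⟩
  · rintro (⟨a, ha, b, hb, rfl⟩ | ⟨a, ha, b, hb, rfl⟩)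
    · exact ⟨a, ha, b, Or.inl hb, rfl⟩
    · exact ⟨a, ha, b, Or.inr hb, rfl⟩

lemma joinC_union_left : joinC (A ∪ B) C = joinC A C ∪ joinC B C := by
  rw [joinC_comm, joinC_union_right, joinC_comm (A := C), joinC_comm (A := C)]

lemma joinC_biUnion {I : Finset ℕ} {f : ℕ → Set (Finset W)} :
    joinC A (⋃ i ∈ I, f i) = ⋃ i ∈ I, joinC A (f i) := by
  ext s
  simp only [mem_joinC, Set.mem_iUnion]
  constructor
  · rintro ⟨a, ha, b, ⟨i, hi, hb⟩, rfl⟩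
    exact ⟨i, hi, a, ha, b, hb, rfl⟩
  · rintro ⟨i, hi, a, ha, b, hb, rfl⟩
    exact ⟨a, ha, b, ⟨i, hi, hb⟩, rfl⟩

lemma IsComplex.simplexOn {A : Finset W} : IsComplex (simplexOn A) :=
  fun _ hF _ hG => hG.trans hF

lemma IsComplex.joinC (hA : IsComplex A) (hB : IsComplex B) : IsComplex (joinC A B) := by
  rintro s ⟨a, ha, b, hb, rfl⟩ G hG
  refine ⟨G ∩ a, hA a ha _ Finset.inter_subset_right, G ∩ b, hB b hb _ Finset.inter_subset_right, ?_⟩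
  rw [← Finset.inter_union_distrib_left]
  exact (Finset.inter_eq_left.2 hG).symm

lemma IsComplex.crossN {d : ℕ} {S : Finset ℕ} : IsComplex (crossN d S) := by
  rintro F ⟨h1, h2⟩ G hG
  exact ⟨fun x hx => h1 x (hG hx), fun j hj hb => h2 j hj ⟨hG hb.1, hG hb.2⟩⟩

lemma subset_joinC_singleton_empty (v : W) : A ⊆ joinC (simplexOn {v}) A := by
  intro s hs
  exact ⟨∅, by simp [Paper.simplexOn], s, hs, by simp⟩

/-- Stellar subdivision at a non-face does nothing. -/
lemma sdC_not_mem {v : W} {F : Finset W} (hC : IsComplex A) (hF : F ∉ A) :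
    sdC v F A = A := by
  have hdel : delFace A F = A := by
    ext G
    simp only [delFace, Set.mem_setOf_eq]
    exact ⟨fun h => h.1, fun h => ⟨h, fun hs => hF (hC G h F hs)⟩⟩
  have hlk : lkC A F = ∅ := by
    ext G
    simp only [lkC, Set.mem_setOf_eq, Set.mem_empty_iff_false, iff_false]
    rintro ⟨-, hm⟩
    exact hF (hC _ hm F Finset.subset_union_left)
  rw [sdC, hdel, hlk, joinC_empty_right, joinC_empty_right, Set.union_empty]

/-- Stellar subdivision of a simplex at a face. -/
lemma sdC_simplexOn (v : W) {F A : Finset W} (hFA : F ⊆ A) :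
    sdC v F (simplexOn A) =
      joinC (simplexOn {v}) (joinC (bdrySimplex F) (simplexOn (A \ F))) := by
  have h1 : delFace (simplexOn A) F = joinC (bdrySimplex F) (simplexOn (A \ F)) := by
    ext G
    simp only [delFace, Paper.simplexOn, bdrySimplex, Set.mem_setOf_eq, mem_joinC]
    constructor
    · rintro ⟨hGA, hnF⟩
      refine ⟨G ∩ F, ⟨Finset.inter_subset_right, fun h => hnF (h.trans Finset.inter_subset_left)⟩, G \ F, ?_, ?_⟩
      · intro x hx
        simp only [Finset.mem_sdiff] at hx ⊢
        exact ⟨hGA hx.1, hx.2⟩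
      · rw [Finset.union_comm, Finset.sdiff_union_inter]
    · rintro ⟨b, hb, a, ha, rfl⟩
      constructor
      · exact Finset.union_subset (hb.1.trans hFA) (ha.trans (Finset.sdiff_subset))
      · intro hF
        obtain ⟨x, hxF, hxb⟩ := Finset.exists_of_ssubset hb
        rcases Finset.mem_union.1 (hF hxF) with h | h
        · exact hxb h
        · exact (Finset.mem_sdiff.1 (ha h)).2 hxF
  have h2 : lkC (simplexOn A) F = simplexOn (A \ F) := by
    ext G
    simp only [lkC, Paper.simplexOn, Set.mem_setOf_eq]
    constructor
    · rintro ⟨hd, hu⟩ x hx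
      simp only [Finset.mem_sdiff]
      exact ⟨hu (Finset.mem_union_right _ hx), Finset.disjoint_right.1 hd hx⟩
    · intro h
      refine ⟨Finset.disjoint_left.2 fun x hxF hxG => (Finset.mem_sdiff.1 (h hxG)).2 hxF, ?_⟩
      exact Finset.union_subset hFA (h.trans Finset.sdiff_subset)
  rw [sdC, h1, h2]
  exact Set.union_eq_self_of_subset_left (subset_joinC_singleton_empty v)

/-- Stellar subdivision of the boundary of a simplex at a facet. -/
lemma sdC_bdrySimplex (v : W) {A : Finset W} {a : W} (ha : a ∈ A) :
    sdC v (A.erase a) (bdrySimplex A) = joinC (pairC a v) (bdrySimplex (A.erase a)) := by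
  have h1 : delFace (bdrySimplex A) (A.erase a) =
      joinC (simplexOn {a}) (bdrySimplex (A.erase a)) := by
    ext G
    simp only [delFace, bdrySimplex, Paper.simplexOn, Set.mem_setOf_eq, mem_joinC]
    constructor
    · rintro ⟨hGA, hne⟩
      refine ⟨G ∩ {a}, Finset.inter_subset_right, G.erase a, ⟨fun x hx => ?_, fun h => hne (h.trans (Finset.erase_subset _ _))⟩, ?_⟩
      · simp only [Finset.mem_erase] at hx ⊢
        exact ⟨hx.1, hGA.1 hx.2⟩
      · ext x
        simp only [Finset.mem_union, Finset.mem_inter, Finset.mem_singleton, Finset.mem_erase]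
        by_cases hxa : x = a <;> simp [hxa]
    · rintro ⟨c, hc, e, he, rfl⟩
      obtain ⟨x, hxE, hxe⟩ := Finset.exists_of_ssubset he
      have hxa : x ≠ a := (Finset.mem_erase.1 hxE).1
      have hxA : x ∈ A := (Finset.mem_erase.1 hxE).2
      have hxce : x ∉ c ∪ e := by
        simp only [Finset.mem_union]
        rintro (h | h)
        · exact hxa (Finset.mem_singleton.1 (hc h))
        · exact hxe h
      constructor
      · refine Finset.ssubset_iff_of_subset ?_ |>.2 ⟨x, hxA, hxce⟩
        exact Finset.union_subset (fun y hy => (Finset.mem_singleton.1 (hc hy)) ▸ ha)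
          (he.1.trans (Finset.erase_subset _ _))
      · intro h
        exact hxce (h hxE)
  have h2 : lkC (bdrySimplex A) (A.erase a) = {∅} := by
    ext G
    simp only [lkC, bdrySimplex, Set.mem_setOf_eq, Set.mem_singleton_iff]
    constructor
    · rintro ⟨hd, hu⟩
      by_contra hne
      obtain ⟨x, hx⟩ := Finset.nonempty_iff_ne_empty.2 hne
      have hxa : x = a := by
        have hxA : x ∈ A := hu.1 (Finset.mem_union_right _ hx)
        by_contra hxa
        exact Finset.disjoint_right.1 hd hx (Finset.mem_erase.2 ⟨hxa, hxA⟩)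
      have : A ⊆ A.erase a ∪ G := by
        intro y hy
        by_cases hya : y = a
        · exact Finset.mem_union_right _ (hya ▸ hxa ▸ hx)
        · exact Finset.mem_union_left _ (Finset.mem_erase.2 ⟨hya, hy⟩)
      exact hu.2 this
    · rintro rfl
      exact ⟨Finset.disjoint_empty_right _, by simpa using Finset.erase_ssubset ha⟩
  rw [sdC, h1, h2, joinC_punit_right, pairC, joinC_union_left]

/-- Stellar subdivision commutes with joining a complex not meeting `F`. -/
lemma sdC_joinC (v : W) {F : Finset W} (hA : IsComplex A) (hB : IsComplex B)
    (hd : ∀ a ∈ A, Disjoint F a) :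
    sdC v F (joinC A B) = joinC A (sdC v F B) := by
  have key : ∀ (a b : Finset W), a ∈ A → Disjoint F a → F ⊆ a ∪ b → F ⊆ b := by
    intro a b haA hdis hsub x hxF
    rcases Finset.mem_union.1 (hsub hxF) with h | h
    · exact absurd h (Finset.disjoint_left.1 hdis hxF)
    · exact h
  have h1 : delFace (joinC A B) F = joinC A (delFace B F) := by
    ext G
    simp only [delFace, Set.mem_setOf_eq, mem_joinC]
    constructor
    · rintro ⟨⟨a, haA, b, hbB, rfl⟩, hnF⟩
      exact ⟨a, haA, b, ⟨hbB, fun h => hnF (h.trans Finset.subset_union_right)⟩, rfl⟩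
    · rintro ⟨a, haA, b, ⟨hbB, hnF⟩, rfl⟩
      exact ⟨⟨a, haA, b, hbB, rfl⟩, fun h => hnF (key a b haA (hd a haA) h)⟩
  have h2 : lkC (joinC A B) F = joinC A (lkC B F) := by
    ext G
    simp only [lkC, Set.mem_setOf_eq, mem_joinC]
    constructor
    · rintro ⟨hdis, a, haA, b, hbB, hab⟩
      have hFb : F ⊆ b := key a b haA (hd a haA) (hab ▸ Finset.subset_union_left)
      refine ⟨G ∩ a, hA a haA _ Finset.inter_subset_right, G ∩ b, ⟨?_, ?_⟩, ?_⟩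
      · exact Finset.disjoint_of_subset_right Finset.inter_subset_left hdis
      · exact hB b hbB _ (Finset.union_subset hFb Finset.inter_subset_right)
      · have : G ⊆ a ∪ b := hab ▸ Finset.subset_union_right
        rw [← Finset.inter_union_distrib_left]
        exact (Finset.inter_eq_left.2 this).symm
    · rintro ⟨a, haA, g, ⟨hdis, hFg⟩, rfl⟩
      refine ⟨Finset.disjoint_union_right.2 ⟨hd a haA, hdis⟩, a, haA, F ∪ g, hFg, ?_⟩
      rw [Finset.union_left_comm, Finset.union_comm a, Finset.union_assoc]
  rw [sdC, sdC, h1, h2, joinC_left_comm (A := bdrySimplex F),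
    joinC_left_comm (A := simplexOn {v}), joinC_union_right]

/-! #### Vertices -/

lemma origV_eq {d m : ℕ} (hm : m < d + 2) : origV d m = Sum.inl ⟨m, hm⟩ := by
  simp [origV, Nat.mod_eq_of_lt hm]

lemma newV_eq {d m : ℕ} (hm : m < d + 1) : newV d m = Sum.inr ⟨m, hm⟩ := by
  simp [newV, Nat.mod_eq_of_lt hm]

lemma origV_inj {d m n : ℕ} (hm : m < d + 2) (hn : n < d + 2)
    (h : origV d m = origV d n) : m = n := by
  rw [origV_eq hm, origV_eq hn] at h
  simpa using h

lemma newV_inj {d m n : ℕ} (hm : m < d + 1) (hn : n < d + 1)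
    (h : newV d m = newV d n) : m = n := by
  rw [newV_eq hm, newV_eq hn] at h
  simpa using h

lemma origV_ne_newV {d m n : ℕ} : origV d m ≠ newV d n := by
  simp [origV, newV]

lemma liftV_injective {d : ℕ} : Function.Injective (liftV d) := by
  intro x y h
  cases x <;> cases y <;> simp [liftV, Fin.castSucc_inj] at h <;> simp [h]

lemma liftV_origV {d m : ℕ} (hm : m < d + 2) : liftV d (origV d m) = origV (d+1) m := by
  rw [origV_eq hm, origV_eq (show m < d + 3 by omega)]
  rfl

lemma liftV_newV {d m : ℕ} (hm : m < d + 1) : liftV d (newV d m) = newV (d+1) m := by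
  rw [newV_eq hm, newV_eq (show m < d + 2 by omega)]
  rfl

/-! #### crossN -/

lemma crossN_empty (d : ℕ) : crossN d (∅ : Finset ℕ) = {∅} := by
  ext F
  simp only [crossN, Set.mem_setOf_eq, Set.mem_singleton_iff]
  constructor
  · rintro ⟨h1, -⟩
    by_contra hne
    obtain ⟨x, hx⟩ := Finset.nonempty_iff_ne_empty.2 hne
    obtain ⟨j, hj, -⟩ := h1 x hx
    simp at hj
  · rintro rfl
    simp

lemma joinC_crossN {d : ℕ} {S T : Finset ℕ} (hST : Disjoint S T)
    (hb : ∀ m ∈ S ∪ T, m < d + 1) :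
    joinC (crossN d S) (crossN d T) = crossN d (S ∪ T) := by
  classical
  have hS : ∀ m ∈ S, m < d + 1 := fun m hm => hb m (Finset.mem_union_left _ hm)
  have hT : ∀ m ∈ T, m < d + 1 := fun m hm => hb m (Finset.mem_union_right _ hm)
  -- a vertex indexed by `S` cannot be indexed by `T`
  have hdet : ∀ {x : V d} {j j'}, j ∈ S → j' ∈ T →
      (x = origV d j ∨ x = newV d j) → (x = origV d j' ∨ x = newV d j') → False := by
    rintro x j j' hj hj' (rfl | rfl) (h | h)
    · exact Finset.disjoint_left.1 hST hj
        ((origV_inj (by have := hS j hj; omega) (by have := hT j' hj'; omega) h) ▸ hj')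
    · exact origV_ne_newV h
    · exact origV_ne_newV h.symm
    · exact Finset.disjoint_left.1 hST hj
        ((newV_inj (hS j hj) (hT j' hj') h) ▸ hj')
  ext F
  simp only [mem_joinC, crossN, Set.mem_setOf_eq]
  constructor
  · rintro ⟨a, ⟨ha1, ha2⟩, b, ⟨hb1, hb2⟩, rfl⟩
    refine ⟨fun x hx => ?_, fun j hj hboth => ?_⟩
    · rcases Finset.mem_union.1 hx with h | h
      · obtain ⟨j, hj, hx⟩ := ha1 x h
        exact ⟨j, Finset.mem_union_left _ hj, hx⟩
      · obtain ⟨j, hj, hx⟩ := hb1 x h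
        exact ⟨j, Finset.mem_union_right _ hj, hx⟩
    · obtain ⟨ho, hn⟩ := hboth
      rcases Finset.mem_union.1 hj with hjS | hjT
      · have ho' : origV d j ∈ a := by
          rcases Finset.mem_union.1 ho with h | h
          · exact h
          · obtain ⟨j', hj', hx⟩ := hb1 _ h
            exact absurd (hdet hjS hj' (Or.inl rfl) hx) (fun f => f)
        have hn' : newV d j ∈ a := by
          rcases Finset.mem_union.1 hn with h | h
          · exact h
          · obtain ⟨j', hj', hx⟩ := hb1 _ h
            exact absurd (hdet hjS hj' (Or.inr rfl) hx) (fun f => f)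
        exact ha2 j hjS ⟨ho', hn'⟩
      · have ho' : origV d j ∈ b := by
          rcases Finset.mem_union.1 ho with h | h
          · obtain ⟨j', hj', hx⟩ := ha1 _ h
            exact absurd (hdet hj' hjT hx (Or.inl rfl)) (fun f => f)
          · exact h
        have hn' : newV d j ∈ b := by
          rcases Finset.mem_union.1 hn with h | h
          · obtain ⟨j', hj', hx⟩ := ha1 _ h
            exact absurd (hdet hj' hjT hx (Or.inr rfl)) (fun f => f)
          · exact h
        exact hb2 j hjT ⟨ho', hn'⟩
  · rintro ⟨h1, h2⟩
    refine ⟨F.filter (fun x => ∃ j ∈ S, x = origV d j ∨ x = newV d j), ⟨?_, ?_⟩,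
      F.filter (fun x => ∃ j ∈ T, x = origV d j ∨ x = newV d j), ⟨?_, ?_⟩, ?_⟩
    · intro x hx
      exact (Finset.mem_filter.1 hx).2
    · intro j hj hboth
      exact h2 j (Finset.mem_union_left _ hj)
        ⟨(Finset.mem_filter.1 hboth.1).1, (Finset.mem_filter.1 hboth.2).1⟩
    · intro x hx
      exact (Finset.mem_filter.1 hx).2
    · intro j hj hboth
      exact h2 j (Finset.mem_union_right _ hj)
        ⟨(Finset.mem_filter.1 hboth.1).1, (Finset.mem_filter.1 hboth.2).1⟩
    · ext x
      simp only [Finset.mem_union, Finset.mem_filter]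
      constructor
      · intro hx
        obtain ⟨j, hj, hor⟩ := h1 x hx
        rcases Finset.mem_union.1 hj with h | h
        · exact Or.inl ⟨hx, j, h, hor⟩
        · exact Or.inr ⟨hx, j, h, hor⟩
      · rintro (⟨hx, -⟩ | ⟨hx, -⟩) <;> exact hx

lemma pairC_eq_crossN {d m : ℕ} (hm : m < d + 1) :
    pairC (origV d m) (newV d m) = crossN d {m} := by
  ext F
  simp only [pairC, Paper.simplexOn, crossN, Set.mem_union, Set.mem_setOf_eq,
    Finset.mem_singleton]
  constructor
  · rintro (h | h)
    · refine ⟨fun x hx => ⟨m, rfl, Or.inl (Finset.mem_singleton.1 (h hx))⟩, ?_⟩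
      rintro j rfl ⟨-, hn⟩
      exact origV_ne_newV (Finset.mem_singleton.1 (h hn)).symm
    · refine ⟨fun x hx => ⟨m, rfl, Or.inr (Finset.mem_singleton.1 (h hx))⟩, ?_⟩
      rintro j rfl ⟨ho, -⟩
      exact origV_ne_newV (Finset.mem_singleton.1 (h ho))
  · rintro ⟨h1, h2⟩
    by_cases ho : origV d m ∈ F
    · left
      intro x hx
      obtain ⟨j, rfl, hor⟩ := h1 x hx
      rcases hor with rfl | rfl
      · simp
      · exact absurd ⟨ho, hx⟩ (h2 _ rfl)
    · right
      intro x hx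
      obtain ⟨j, rfl, hor⟩ := h1 x hx
      rcases hor with rfl | rfl
      · exact absurd hx ho
      · simp

lemma IsComplex.bdrySimplex {A : Finset W} : IsComplex (bdrySimplex A) :=
  fun _ hF _ hG => lt_of_le_of_lt hG hF

lemma simplexOn_union {A B : Finset W} :
    simplexOn (A ∪ B) = joinC (simplexOn A) (simplexOn B) := by
  ext G
  simp only [Paper.simplexOn, Set.mem_setOf_eq, mem_joinC]
  constructor
  · intro h
    refine ⟨G ∩ A, Finset.inter_subset_right, G ∩ B, Finset.inter_subset_right, ?_⟩
    rw [← Finset.inter_union_distrib_left]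
    exact (Finset.inter_eq_left.2 h).symm
  · rintro ⟨a, ha, b, hb, rfl⟩
    exact Finset.union_subset (ha.trans Finset.subset_union_left)
      (hb.trans Finset.subset_union_right)

/-! #### mapC -/

lemma mapC_joinC {f : W → W'} : mapC f (joinC A B) = joinC (mapC f A) (mapC f B) := by
  ext F
  simp only [mapC, mem_joinC, Set.mem_setOf_eq]
  constructor
  · rintro ⟨G, ⟨a, ha, b, hb, rfl⟩, rfl⟩
    exact ⟨a.image f, ⟨a, ha, rfl⟩, b.image f, ⟨b, hb, rfl⟩, Finset.image_union a b⟩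
  · rintro ⟨x, ⟨a, ha, rfl⟩, y, ⟨b, hb, rfl⟩, rfl⟩
    exact ⟨a ∪ b, ⟨a, ha, b, hb, rfl⟩, (Finset.image_union a b).symm⟩

lemma mapC_simplexOn {f : W → W'} {A : Finset W} :
    mapC f (simplexOn A) = simplexOn (A.image f) := by
  classical
  ext F
  simp only [mapC, Paper.simplexOn, Set.mem_setOf_eq]
  constructor
  · rintro ⟨G, hG, rfl⟩
    exact Finset.image_subset_image hG
  · intro h
    refine ⟨A.filter (fun a => f a ∈ F), Finset.filter_subset _ _, ?_⟩
    ext y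
    simp only [Finset.mem_image, Finset.mem_filter]
    constructor
    · intro hy
      obtain ⟨a, haA, rfl⟩ := Finset.mem_image.1 (h hy)
      exact ⟨a, ⟨haA, hy⟩, rfl⟩
    · rintro ⟨a, ⟨-, hfa⟩, rfl⟩
      exact hfa

lemma mapC_biUnion {f : W → W'} {I : Finset ℕ} {g : ℕ → Set (Finset W)} :
    mapC f (⋃ i ∈ I, g i) = ⋃ i ∈ I, mapC f (g i) := by
  ext F
  simp only [mapC, Set.mem_iUnion, Set.mem_setOf_eq]
  tauto

/-- Retraction of `liftV`. -/
def dropV (d : ℕ) : V (d+1) → V d := Sum.elim (fun j => origV d j.val) (fun j => newV d j.val)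

lemma dropV_origV {d m : ℕ} (hm : m < d + 2) : dropV d (origV (d+1) m) = origV d m := by
  rw [origV_eq (show m < d + 3 by omega)]
  simp [dropV]

lemma dropV_newV {d m : ℕ} (hm : m < d + 1) : dropV d (newV (d+1) m) = newV d m := by
  rw [newV_eq (show m < d + 2 by omega)]
  simp [dropV]

lemma mapC_crossN {d : ℕ} {S : Finset ℕ} (hS : ∀ m ∈ S, m < d + 1) :
    mapC (liftV d) (crossN d S) = crossN (d+1) S := by
  classical
  ext F
  simp only [mapC, crossN, Set.mem_setOf_eq]
  constructor
  · rintro ⟨G, ⟨h1, h2⟩, rfl⟩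
    refine ⟨fun x hx => ?_, fun j hj hboth => ?_⟩
    · obtain ⟨y, hyG, rfl⟩ := Finset.mem_image.1 hx
      obtain ⟨j, hj, hor⟩ := h1 y hyG
      rcases hor with rfl | rfl
      · exact ⟨j, hj, Or.inl (liftV_origV (by have := hS j hj; omega))⟩
      · exact ⟨j, hj, Or.inr (liftV_newV (hS j hj))⟩
    · refine h2 j hj ⟨?_, ?_⟩
      · obtain ⟨y, hyG, hy⟩ := Finset.mem_image.1 hboth.1
        have : y = origV d j := liftV_injective (by
          rw [hy, liftV_origV (by have := hS j hj; omega)])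
        exact this ▸ hyG
      · obtain ⟨y, hyG, hy⟩ := Finset.mem_image.1 hboth.2
        have : y = newV d j := liftV_injective (by rw [hy, liftV_newV (hS j hj)])
        exact this ▸ hyG
  · rintro ⟨h1, h2⟩
    have hsec : ∀ x ∈ F, liftV d (dropV d x) = x := by
      intro x hx
      obtain ⟨j, hj, hor⟩ := h1 x hx
      have hjd := hS j hj
      rcases hor with rfl | rfl
      · rw [dropV_origV (by omega), liftV_origV (by omega)]
      · rw [dropV_newV hjd, liftV_newV hjd]
    have himg : F = (F.image (dropV d)).image (liftV d) := by
      ext y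
      simp only [Finset.mem_image]
      constructor
      · intro hy; exact ⟨dropV d y, ⟨y, hy, rfl⟩, hsec y hy⟩
      · rintro ⟨x, ⟨z, hz, rfl⟩, rfl⟩; rw [hsec z hz]; exact hz
    refine ⟨F.image (dropV d), ⟨fun y hy => ?_, fun j hj hboth => ?_⟩, himg⟩
    · obtain ⟨x, hxF, rfl⟩ := Finset.mem_image.1 hy
      obtain ⟨j, hj, hor⟩ := h1 x hxF
      have hjd := hS j hj
      rcases hor with rfl | rfl
      · exact ⟨j, hj, Or.inl (dropV_origV (by omega))⟩
      · exact ⟨j, hj, Or.inr (dropV_newV hjd)⟩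
    · have hjd := hS j hj
      have ho : origV (d+1) j ∈ F := by
        obtain ⟨x, hxF, hx⟩ := Finset.mem_image.1 hboth.1
        have := hsec x hxF
        rw [hx] at this
        rw [liftV_origV (by omega)] at this
        exact this ▸ hxF
      have hn : newV (d+1) j ∈ F := by
        obtain ⟨x, hxF, hx⟩ := Finset.mem_image.1 hboth.2
        have := hsec x hxF
        rw [hx] at this
        rw [liftV_newV hjd] at this
        exact this ▸ hxF
      exact h2 j hj ⟨ho, hn⟩

/-! #### Concrete finsets -/

lemma mem_Fsub {d i : ℕ} {x : V d} :
    x ∈ Fsub d i ↔ ∃ m, i < m ∧ m ≤ d + 1 ∧ x = origV d m := by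
  simp only [Fsub, Finset.mem_image, Finset.mem_Ioc]
  constructor
  · rintro ⟨m, ⟨h1, h2⟩, rfl⟩; exact ⟨m, h1, h2, rfl⟩
  · rintro ⟨m, h1, h2, rfl⟩; exact ⟨m, ⟨h1, h2⟩, rfl⟩

lemma mem_Gface {d j : ℕ} {x : V d} :
    x ∈ Gface d j ↔ ∃ k, k < d + 2 ∧ k ≠ j ∧ x = origV d k := by
  simp only [Gface, Finset.mem_image, Finset.mem_filter, Finset.mem_range]
  constructor
  · rintro ⟨k, ⟨h1, h2⟩, rfl⟩; exact ⟨k, h1, h2, rfl⟩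
  · rintro ⟨k, h1, h2, rfl⟩; exact ⟨k, ⟨h1, h2⟩, rfl⟩

lemma Fsub_subset_Gface {d j : ℕ} : Fsub d j ⊆ Gface d j := by
  intro x hx
  obtain ⟨m, h1, h2, rfl⟩ := mem_Fsub.1 hx
  exact mem_Gface.2 ⟨m, by omega, by omega, rfl⟩

lemma Gface_sdiff_Fsub {d j : ℕ} (hj : j ≤ d + 1) :
    Gface d j \ Fsub d j = (Finset.range j).image (origV d) := by
  ext x
  simp only [Finset.mem_sdiff, mem_Gface, mem_Fsub, Finset.mem_image, Finset.mem_range]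
  constructor
  · rintro ⟨⟨k, h1, h2, rfl⟩, hn⟩
    refine ⟨k, ?_, rfl⟩
    by_contra hk
    exact hn ⟨k, by omega, by omega, rfl⟩
  · rintro ⟨k, hk, rfl⟩
    refine ⟨⟨k, by omega, by omega, rfl⟩, ?_⟩
    rintro ⟨m, h1, h2, hx⟩
    have := origV_inj (by omega) (by omega) hx
    omega

lemma origV_notMem_GammaC {d j : ℕ} (hj : j < d + 2) {F : Finset (V d)}
    (hF : F ∈ GammaC d j) : origV d j ∉ F := by
  intro hmem
  obtain ⟨k, h1, h2, hx⟩ := mem_Gface.1 (hF hmem)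
  exact h2 (origV_inj hj h1 hx).symm

lemma Fsub_notMem_GammaC {d i j : ℕ} (hij : i < j) (hj : j ≤ d + 1) :
    Fsub d i ∉ GammaC d j := by
  intro h
  exact origV_notMem_GammaC (by omega) h (mem_Fsub.2 ⟨j, hij, hj, rfl⟩)

lemma Fsub_erase {d i : ℕ} (hi : i + 1 ≤ d + 1) :
    Fsub d (i+1) = (Fsub d i).erase (origV d (i+1)) := by
  ext x
  simp only [Finset.mem_erase, mem_Fsub]
  constructor
  · rintro ⟨m, h1, h2, rfl⟩
    refine ⟨fun h => ?_, ⟨m, by omega, h2, rfl⟩⟩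
    have := origV_inj (by omega) (by omega) h
    omega
  · rintro ⟨hne, m, h1, h2, rfl⟩
    have hm : m ≠ i + 1 := fun h => hne (by rw [h])
    exact ⟨m, by omega, h2, rfl⟩

lemma origV_mem_Fsub {d i : ℕ} (hi : i + 1 ≤ d + 1) : origV d (i+1) ∈ Fsub d i :=
  mem_Fsub.2 ⟨i+1, by omega, hi, rfl⟩

lemma Fsub_last {d : ℕ} : Fsub d d = {origV d (d+1)} := by
  ext x
  simp only [mem_Fsub, Finset.mem_singleton]
  constructor
  · rintro ⟨m, h1, h2, rfl⟩
    have : m = d + 1 := by omega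
    rw [this]
  · rintro rfl
    exact ⟨d+1, by omega, le_rfl, rfl⟩

lemma bdrySimplex_singleton {x : W} : bdrySimplex ({x} : Finset W) = {∅} := by
  ext F
  simp [Paper.bdrySimplex, Finset.ssubset_singleton_iff]

lemma Bset_image {d j : ℕ} (hj : j ≤ d) :
    (Bset d j).image (liftV d) = Bset (d+1) j := by
  rw [Bset, Bset, Finset.image_union, Finset.image_singleton,
    liftV_newV (by omega), Finset.image_image]
  congr 1
  apply Finset.image_congr
  intro k hk
  simp only [Finset.mem_coe, Finset.mem_range] at hk
  exact liftV_origV (by omega)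

/-! #### The closed form of `Diam d (GammaC d j)` -/

lemma disj_aux {d j i : ℕ} (hji : j ≤ i) (_hid : i ≤ d) :
    ∀ a ∈ joinC (simplexOn (Bset d j)) (crossN d (Finset.Ioc j i)),
      Disjoint (Fsub d (i+1)) a := by
  rintro a ⟨s, hs, c, ⟨hc1, -⟩, rfl⟩
  rw [Finset.disjoint_left]
  intro x hx hxa
  obtain ⟨m, hm1, hm2, rfl⟩ := mem_Fsub.1 hx
  rcases Finset.mem_union.1 hxa with h | h
  · have := hs h
    rw [Bset, Finset.mem_union, Finset.mem_singleton] at this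
    rcases this with h' | h'
    · obtain ⟨k, hk, hkx⟩ := Finset.mem_image.1 h'
      rw [Finset.mem_range] at hk
      have := origV_inj (by omega) (by omega) hkx
      omega
    · exact origV_ne_newV h'
  · obtain ⟨k, hk, hor⟩ := hc1 _ h
    rw [Finset.mem_Ioc] at hk
    rcases hor with h' | h'
    · have := origV_inj (by omega) (by omega) h'
      omega
    · exact origV_ne_newV h'

lemma DiamStep_first {d j : ℕ} (hj : j ≤ d) :
    DiamStep d (GammaC d j) j = Inv d j j := by
  have : DiamStep d (GammaC d j) j = sdC (newV d j) (Fsub d j) (simplexOn (Gface d j)) := rfl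
  rw [this, sdC_simplexOn _ Fsub_subset_Gface, Gface_sdiff_Fsub (by omega),
    Inv, Finset.Ioc_self, crossN_empty, joinC_punit_left, Bset, simplexOn_union,
    joinC_comm (A := simplexOn ((Finset.range j).image (origV d)))
      (B := simplexOn {newV d j}),
    joinC_comm (A := bdrySimplex (Fsub d j))
      (B := simplexOn ((Finset.range j).image (origV d))),
    joinC_assoc]

lemma InvStep {d j i : ℕ} (hji : j ≤ i) (hid : i < d) :
    DiamStep d (Inv d j i) (i+1) = Inv d j (i+1) := by
  have hstep : DiamStep d (Inv d j i) (i+1) =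
      sdC (newV d (i+1)) (Fsub d (i+1)) (Inv d j i) := rfl
  rw [hstep, Inv, ← joinC_assoc,
    sdC_joinC _ (IsComplex.joinC IsComplex.simplexOn IsComplex.crossN)
      IsComplex.bdrySimplex (disj_aux hji (by omega)),
    Fsub_erase (by omega), sdC_bdrySimplex _ (origV_mem_Fsub (by omega)),
    ← Fsub_erase (by omega), pairC_eq_crossN (by omega)]
  have hsplit : crossN d (Finset.Ioc j (i+1)) =
      joinC (crossN d (Finset.Ioc j i)) (crossN d {i+1}) := by
    have hdisj : Disjoint (Finset.Ioc j i) ({i+1} : Finset ℕ) := by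
      simp only [Finset.disjoint_singleton_right, Finset.mem_Ioc]
      omega
    have hbnd : ∀ m ∈ Finset.Ioc j i ∪ {i+1}, m < d + 1 := by
      intro m hm
      simp only [Finset.mem_union, Finset.mem_Ioc, Finset.mem_singleton] at hm
      omega
    have hu : Finset.Ioc j (i+1) = Finset.Ioc j i ∪ {i+1} := by
      ext m
      simp only [Finset.mem_union, Finset.mem_Ioc, Finset.mem_singleton]
      omega
    rw [hu, ← joinC_crossN hdisj hbnd]
  rw [Inv, hsplit, joinC_assoc, joinC_assoc]

lemma foldl_fixed {α : Type*} {f : α → ℕ → α} {A : α} :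
    ∀ {L : List ℕ}, (∀ i ∈ L, f A i = A) → L.foldl f A = A := by
  intro L
  induction L with
  | nil => intro _; rfl
  | cons x L ih =>
    intro h
    rw [List.foldl_cons, h x (List.mem_cons_self (a := x) (l := L))]
    exact ih (fun i hi => h i (List.mem_cons_of_mem x hi))

lemma fold_tail {d j : ℕ} :
    ∀ k, j + k ≤ d →
      List.foldl (DiamStep d) (Inv d j j) ((List.range k).map (fun x => (j+1) + x)) =
        Inv d j (j+k) := by
  intro k
  induction k with
  | zero => intro _; rfl
  | succ k ih =>
    intro hk
    rw [List.range_succ, List.map_append, List.foldl_append, ih (by omega)]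
    have h1 : (j + 1) + k = (j + k) + 1 := by omega
    have h2 : j + (k + 1) = (j + k) + 1 := by omega
    rw [List.map_singleton, List.foldl_cons, List.foldl_nil, h1, h2]
    exact InvStep (by omega) (by omega)

lemma Inv_last {d j : ℕ} :
    Inv d j d = joinC (simplexOn (Bset d j)) (crossN d (Finset.Ioc j d)) := by
  rw [Inv, Fsub_last, bdrySimplex_singleton, joinC_punit_right]

theorem diam_gammaC {d j : ℕ} (hj : j ≤ d) :
    Diam d (GammaC d j) = joinC (simplexOn (Bset d j)) (crossN d (Finset.Ioc j d)) := by
  have hd : Diam d (GammaC d j) =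
      List.foldl (DiamStep d) (GammaC d j) (List.range (d+1)) := rfl
  have hsplit : List.range (d+1) =
      (List.range j ++ [j]) ++ (List.range (d-j)).map (fun x => (j+1) + x) := by
    rw [← List.range_succ, ← List.range_add]
    congr 1
    omega
  rw [hd, hsplit, List.foldl_append, List.foldl_append]
  have hhead : List.foldl (DiamStep d) (GammaC d j) (List.range j) = GammaC d j := by
    apply foldl_fixed
    intro i hi
    rw [List.mem_range] at hi
    exact sdC_not_mem IsComplex.simplexOn (Fsub_notMem_GammaC hi (by omega))
  rw [hhead]
  have hone : List.foldl (DiamStep d) (GammaC d j) [j] = Inv d j j := by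
    rw [List.foldl_cons, List.foldl_nil, DiamStep_first hj]
  rw [hone, fold_tail (d-j) (by omega), show j + (d - j) = d by omega, Inv_last]

/-! #### Distribution over unions -/

lemma sdC_biUnion {v : W} {F : Finset W} {I : Finset ℕ} {f : ℕ → Set (Finset W)} :
    sdC v F (⋃ i ∈ I, f i) = ⋃ i ∈ I, sdC v F (f i) := by
  have h1 : delFace (⋃ i ∈ I, f i) F = ⋃ i ∈ I, delFace (f i) F := by
    ext G
    simp only [delFace, Set.mem_setOf_eq, Set.mem_iUnion]
    tauto
  have h2 : lkC (⋃ i ∈ I, f i) F = ⋃ i ∈ I, lkC (f i) F := by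
    ext G
    simp only [lkC, Set.mem_setOf_eq, Set.mem_iUnion]
    tauto
  rw [sdC, h1, h2, joinC_biUnion, joinC_biUnion]
  ext G
  simp only [Set.mem_union, Set.mem_iUnion, sdC]
  constructor
  · rintro (⟨i, hi, h⟩ | ⟨i, hi, h⟩)
    · exact ⟨i, hi, Or.inl h⟩
    · exact ⟨i, hi, Or.inr h⟩
  · rintro ⟨i, hi, h | h⟩
    · exact Or.inl ⟨i, hi, h⟩
    · exact Or.inr ⟨i, hi, h⟩

lemma foldl_DiamStep_biUnion {d : ℕ} :
    ∀ (L : List ℕ) (f : ℕ → Set (Finset (V d))) (I : Finset ℕ),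
      List.foldl (DiamStep d) (⋃ i ∈ I, f i) L = ⋃ i ∈ I, List.foldl (DiamStep d) (f i) L := by
  intro L
  induction L with
  | nil => intro f I; rfl
  | cons x L ih =>
    intro f I
    rw [List.foldl_cons]
    have : DiamStep d (⋃ i ∈ I, f i) x = ⋃ i ∈ I, DiamStep d (f i) x := sdC_biUnion
    rw [this]
    exact ih (fun i => DiamStep d (f i) x) I

lemma Diam_biUnion {d : ℕ} {I : Finset ℕ} {f : ℕ → Set (Finset (V d))} :
    Diam d (⋃ i ∈ I, f i) = ⋃ i ∈ I, Diam d (f i) :=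
  foldl_DiamStep_biUnion (List.range (d+1)) f I

lemma GammaU_eq_biUnion {d : ℕ} {I : Finset ℕ} :
    GammaU d I = ⋃ i ∈ I, GammaC d i := by
  ext F
  simp only [GammaU, GammaC, Paper.simplexOn, Set.mem_setOf_eq, Set.mem_iUnion]
  tauto

end Aux

/-- (with the paper's dimension `d` rendered as `d+1`, so that
`d ∉ I` becomes `∀ i ∈ I, i ≤ d`) the diamond complex is the join of the
0-sphere `{d+1, v_{d+1}}` with the one-dimension-lower diamond complex. -/
theorem stmt10 (d : ℕ) (I : Finset ℕ) (hI : ∀ i ∈ I, i ≤ d) :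
    DiamU (d+1) I = joinC (crossN (d+1) {d+1}) (mapC (liftV d) (DiamU d I)) := by
  have hL : DiamU (d+1) I = ⋃ i ∈ I,
      joinC (simplexOn (Bset (d+1) i)) (crossN (d+1) (Finset.Ioc i (d+1))) := by
    rw [DiamU, GammaU_eq_biUnion, Diam_biUnion]
    exact Set.iUnion_congr fun i => Set.iUnion_congr fun hi =>
      diam_gammaC (by have := hI i hi; omega)
  have hR : DiamU d I = ⋃ i ∈ I,
      joinC (simplexOn (Bset d i)) (crossN d (Finset.Ioc i d)) := by
    rw [DiamU, GammaU_eq_biUnion, Diam_biUnion]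
    exact Set.iUnion_congr fun i => Set.iUnion_congr fun hi => diam_gammaC (hI i hi)
  rw [hL, hR, mapC_biUnion, joinC_biUnion]
  refine Set.iUnion_congr fun i => Set.iUnion_congr fun hi => ?_
  have hi' := hI i hi
  rw [mapC_joinC, mapC_simplexOn, Bset_image hi',
    mapC_crossN (by intro m hm; rw [Finset.mem_Ioc] at hm; omega)]
  have hsplit : crossN (d+1) (Finset.Ioc i (d+1)) =
      joinC (crossN (d+1) (Finset.Ioc i d)) (crossN (d+1) {d+1}) := by
    have hdisj : Disjoint (Finset.Ioc i d) ({d+1} : Finset ℕ) := by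
      simp only [Finset.disjoint_singleton_right, Finset.mem_Ioc]
      omega
    have hbnd : ∀ m ∈ Finset.Ioc i d ∪ {d+1}, m < (d+1) + 1 := by
      intro m hm
      simp only [Finset.mem_union, Finset.mem_Ioc, Finset.mem_singleton] at hm
      omega
    have hu : Finset.Ioc i (d+1) = Finset.Ioc i d ∪ {d+1} := by
      ext m
      simp only [Finset.mem_union, Finset.mem_Ioc, Finset.mem_singleton]
      omega
    rw [hu, ← joinC_crossN hdisj hbnd]
  rw [hsplit,
    joinC_comm (A := crossN (d+1) (Finset.Ioc i d)) (B := crossN (d+1) {d+1}),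
    joinC_left_comm (A := simplexOn (Bset (d+1) i)) (B := crossN (d+1) {d+1})
      (C := crossN (d+1) (Finset.Ioc i d))]

end Paper
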